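/- For α ∈ ℂ^r with r ≥ 2, the determinant of the matrix A(α) with (δ,ε)-entry (−1)^m·exp((π√−1/2)∑_{j=1}^r ε_j δ_j α_j) equals (∏_{j=1}^r 2√−1·sin(πα_j))^{2^{r−1}}. -/

import Mathlib

open Matrix

/-- The sign `±1` associated to a Boolean. -/
def sg (b : Bool) : ℂ := if b then 1 else -1

/-- The `2^r × 2^r` matrix `A(α)` with `(δ,ε)`-entry
`(-1)^m exp((π√-1/2) ∑_j ε_j δ_j α_j)`. -/
noncomputable def Amat (r m : ℕ) (α : Fin r → ℂ) :
    Matrix (Fin r → Bool) (Fin r → Bool) ℂ :=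
  Matrix.of fun δ ε =>
    (-1 : ℂ) ^ m * Complex.exp ((Real.pi : ℂ) * Complex.I / 2 * ∑ j, sg (ε j) * sg (δ j) * α j)

open Kronecker in
/-- The 2×2 factor matrix. -/
noncomputable def Bmat (a : ℂ) : Matrix Bool Bool ℂ :=
  Matrix.of fun d e => Complex.exp ((Real.pi : ℂ) * Complex.I / 2 * (sg e * sg d * a))

lemma det_Bmat (a : ℂ) : (Bmat a).det = 2 * Complex.I * Complex.sin ((Real.pi : ℂ) * a) := by
  rw [← Matrix.det_submatrix_equiv_self finTwoEquiv (Bmat a), Matrix.det_fin_two]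
  simp [Bmat, sg, Complex.sin, finTwoEquiv, ← Complex.exp_add]
  ring_nf
  simp [Complex.I_sq]
  ring_nf

open Kronecker in
lemma Amat_succ (r : ℕ) (α : Fin (r+1) → ℂ) :
    Amat (r+1) 0 α =
      Matrix.submatrix (Bmat (α 0) ⊗ₖ Amat r 0 (fun j => α j.succ))
        (Fin.consEquiv (fun _ => Bool)).symm (Fin.consEquiv (fun _ => Bool)).symm := by
  ext δ ε
  simp [Amat, Bmat, Fin.sum_univ_succ, Fin.tail, mul_add, Complex.exp_add]

lemma det_Amat0 (r : ℕ) (α : Fin (r+1) → ℂ) :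
    (Amat (r+1) 0 α).det =
      (∏ j, 2 * Complex.I * Complex.sin ((Real.pi : ℂ) * α j)) ^ (2 ^ r) := by
  induction r with
  | zero =>
      rw [Amat_succ, Matrix.det_submatrix_equiv_self, Matrix.det_kronecker]
      have h0 : (Amat 0 0 (fun j => α j.succ)).det = 1 := by
        rw [Matrix.det_unique]
        simp [Amat]
      simp [h0, det_Bmat, Amat]
  | succ n ih =>
      rw [Amat_succ, Matrix.det_submatrix_equiv_self, Matrix.det_kronecker, det_Bmat]
      have hcard : Fintype.card (Fin (n+1) → Bool) = 2 ^ (n+1) := by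
        simp [Fintype.card_fun]
      rw [Fin.prod_univ_succ, mul_pow, hcard, Fintype.card_bool, ih, ← pow_mul, ← pow_succ]
      ring

theorem det_Amat (r m : ℕ) (hr : 2 ≤ r) (hm : m = 0 ∨ m = 1) (α : Fin r → ℂ) :
    (Amat r m α).det =
      (∏ j, 2 * Complex.I * Complex.sin ((Real.pi : ℂ) * α j)) ^ (2 ^ (r - 1)) := by
  obtain ⟨k, rfl⟩ : ∃ k, r = k + 1 := ⟨r - 1, by omega⟩
  have hsmul : Amat (k+1) m α = ((-1:ℂ)^m) • Amat (k+1) 0 α := by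
    ext δ ε
    simp [Amat]
  rw [hsmul, Matrix.det_smul, det_Amat0]
  have hc : Fintype.card (Fin (k+1) → Bool) = 2 ^ (k+1) := by
    simp [Fintype.card_fun]
  have hone : ((-1:ℂ)^m) ^ Fintype.card (Fin (k+1) → Bool) = 1 := by
    rw [hc]
    rcases hm with rfl | rfl
    · simp
    · rw [pow_one]
      exact Even.neg_one_pow ⟨2^k, by rw [pow_succ]; ring⟩
  rw [hone, one_mul, Nat.add_sub_cancel]
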